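/- For even N ≥ 4, the minimum Hamming weight of an element of C_2^⊥ \ C_1^⊥ equals N/2, achieved by the perfect matching vector Σ_{i=1}^{N/2} e_{2i−1,2i}. -/

import Mathlib

open Finset

/-- Index type for edges of the complete graph on `Fin n`: non-diagonal unordered pairs. -/
abbrev EdgeIdx (n : ℕ) := {p : Sym2 (Fin n) // ¬ p.IsDiag}

/-- The GF(2) edge space of the complete graph `K_n`. -/
abbrev EdgeSpace (n : ℕ) := EdgeIdx n → ZMod 2

/-- The basis vector `e_{ij}` of the edge space (zero when `i = j`). -/
def eVec (n : ℕ) (i j : Fin n) : EdgeSpace n :=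
  fun p => if (p : Sym2 (Fin n)) = s(i, j) then 1 else 0

/-- The star vector `A_j := Σ_{l ≠ j} e_{lj}` (the term `l = j` contributes zero). -/
def starVec (n : ℕ) (j : Fin n) : EdgeSpace n := ∑ l : Fin n, eVec n l j

/-- The triangle vector `T_{ijk} := e_{ij} + e_{jk} + e_{ki}`. -/
def triVec (n : ℕ) (i j k : Fin n) : EdgeSpace n := eVec n i j + eVec n j k + eVec n k i

/-- The GF(2) dot product on the edge space. -/
def edot {n : ℕ} (v w : EdgeSpace n) : ZMod 2 := ∑ p : EdgeIdx n, v p * w p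

/-- `C_1 = span{A_1, …, A_{n-1}}` (vertices `0, …, n-2` in 0-indexed notation). -/
def C1 (n : ℕ) : Submodule (ZMod 2) (EdgeSpace n) :=
  Submodule.span (ZMod 2) (starVec n '' {j : Fin n | (j : ℕ) < n - 1})

/-- `C_1^⊥ = span{T_{1jk} : 2 ≤ j < k ≤ n}` (triangles through vertex `0`). -/
def C1perp (n : ℕ) [NeZero n] : Submodule (ZMod 2) (EdgeSpace n) :=
  Submodule.span (ZMod 2)
    {v | ∃ j k : Fin n, j ≠ 0 ∧ k ≠ 0 ∧ j ≠ k ∧ v = triVec n 0 j k}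

/-- `C_2 = span{A_1 + A_j : 2 ≤ j ≤ n-1}` (vertices `1, …, n-2` in 0-indexed notation). -/
def C2 (n : ℕ) [NeZero n] : Submodule (ZMod 2) (EdgeSpace n) :=
  Submodule.span (ZMod 2)
    {v | ∃ j : Fin n, 0 < (j : ℕ) ∧ (j : ℕ) < n - 1 ∧ v = starVec n 0 + starVec n j}

/-- Hamming weight (size of the support). -/
def wt {n : ℕ} (v : EdgeSpace n) : ℕ := (Finset.univ.filter fun p => v p ≠ 0).card

/-- The perfect-matching vector `Σ_{i=1}^{N/2} e_{2i-1, 2i}` (0-indexed: edges `{2i, 2i+1}`). -/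
def matching (N : ℕ) : EdgeSpace N :=
  ∑ i : Fin (N / 2),
    eVec N ⟨2 * i.val, by have := i.isLt; omega⟩ ⟨2 * i.val + 1, by have := i.isLt; omega⟩

/-- Restriction of an edge-space vector to the coordinates of edges incident to vertex `r`;
recorded as the function `k ↦ v(e_{rk})` (with value `0` at `k = r`). -/
def projVec (n : ℕ) (r : Fin n) (v : EdgeSpace n) : Fin n → ZMod 2 :=
  fun k => edot v (eVec n r k)

section Helpers

variable {n : ℕ}

/-- Make an edge index from two distinct vertices. -/
def mkE (n : ℕ) (i j : Fin n) (h : i ≠ j) : EdgeIdx n :=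
  ⟨s(i, j), by simpa [Sym2.mk_isDiag_iff] using h⟩

lemma eVec_symm (i j : Fin n) : eVec n i j = eVec n j i := by
  funext p; unfold eVec; rw [Sym2.eq_swap]

lemma edot_eVec (v : EdgeSpace n) (i j : Fin n) (h : i ≠ j) :
    edot v (eVec n i j) = v (mkE n i j h) := by
  unfold edot eVec
  rw [Finset.sum_eq_single (mkE n i j h)]
  · simp [mkE]
  · intro p _ hp
    have : (p : Sym2 (Fin n)) ≠ s(i, j) := by
      intro hc
      exact hp (Subtype.ext hc)
    simp [this]
  · simp

lemma edot_eVec_diag (v : EdgeSpace n) (i : Fin n) :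
    edot v (eVec n i i) = 0 := by
  unfold edot eVec
  apply Finset.sum_eq_zero
  intro p _
  have : (p : Sym2 (Fin n)) ≠ s(i, i) := by
    intro hc
    exact p.2 (hc ▸ Sym2.mk_isDiag_iff.mpr rfl)
  simp [this]

lemma edot_add_right (v w₁ w₂ : EdgeSpace n) :
    edot v (w₁ + w₂) = edot v w₁ + edot v w₂ := by
  unfold edot
  rw [← Finset.sum_add_distrib]
  exact Finset.sum_congr rfl fun p _ => by simp [mul_add]

lemma edot_add_left (v₁ v₂ w : EdgeSpace n) :
    edot (v₁ + v₂) w = edot v₁ w + edot v₂ w := by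
  unfold edot
  rw [← Finset.sum_add_distrib]
  exact Finset.sum_congr rfl fun p _ => by simp [add_mul]

lemma edot_smul_right (c : ZMod 2) (v w : EdgeSpace n) :
    edot v (c • w) = c * edot v w := by
  unfold edot
  rw [Finset.mul_sum]
  exact Finset.sum_congr rfl fun p _ => by simp [mul_comm, mul_assoc, mul_left_comm]

lemma edot_zero_right (v : EdgeSpace n) : edot v 0 = 0 := by
  unfold edot; simp

lemma edot_sum_left {ι : Type*} (s : Finset ι) (f : ι → EdgeSpace n) (w : EdgeSpace n) :
    edot (∑ i ∈ s, f i) w = ∑ i ∈ s, edot (f i) w := by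
  unfold edot
  rw [Finset.sum_comm]
  exact Finset.sum_congr rfl fun p _ => by simp [Finset.sum_mul]

lemma edot_sum_right {ι : Type*} (s : Finset ι) (v : EdgeSpace n) (f : ι → EdgeSpace n) :
    edot v (∑ i ∈ s, f i) = ∑ i ∈ s, edot v (f i) := by
  unfold edot
  rw [Finset.sum_comm]
  exact Finset.sum_congr rfl fun p _ => by simp [Finset.mul_sum]

/-- Degree (mod 2) of vertex `r` in the support graph of `v`. -/
def degv (v : EdgeSpace n) (r : Fin n) : ZMod 2 := ∑ k : Fin n, edot v (eVec n r k)

lemma edot_starVec (v : EdgeSpace n) (j : Fin n) :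
    edot v (starVec n j) = degv v j := by
  unfold starVec degv
  rw [edot_sum_right]
  exact Finset.sum_congr rfl fun l _ => by rw [eVec_symm]

end Helpers
section Deg

variable {n : ℕ}

lemma edge_rep (p : EdgeIdx n) : ∃ a b : Fin n, a ≠ b ∧ (p : Sym2 (Fin n)) = s(a, b) := by
  obtain ⟨z, hz⟩ := p
  induction z using Sym2.ind with
  | _ a b =>
    exact ⟨a, b, by simpa [Sym2.mk_isDiag_iff] using hz, rfl⟩

/-- `degv` expressed as a sum over edges. -/
lemma degv_eq_sum (v : EdgeSpace n) (r : Fin n) :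
    degv v r = ∑ p : EdgeIdx n, (if r ∈ (p : Sym2 (Fin n)) then v p else 0) := by
  unfold degv edot
  rw [Finset.sum_comm]
  refine Finset.sum_congr rfl fun p _ => ?_
  obtain ⟨a, b, hab, hp⟩ := edge_rep p
  by_cases hr : r ∈ (p : Sym2 (Fin n))
  · rw [if_pos hr]
    rw [hp, Sym2.mem_iff] at hr
    rcases hr with rfl | rfl
    · rw [Finset.sum_eq_single b]
      · simp [eVec, hp]
      · intro k _ hk
        have : (p : Sym2 (Fin n)) ≠ s(r, k) := by
          rw [hp]
          intro hc
          rw [Sym2.mk_eq_mk_iff (p := (_, _)) (q := (_, _))] at hc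
          rcases hc with h | h <;> simp_all [Prod.ext_iff]
        simp [eVec, this]
      · simp
    · rw [Finset.sum_eq_single a]
      · simp [eVec, hp, Sym2.eq_swap]
      · intro k _ hk
        have : (p : Sym2 (Fin n)) ≠ s(r, k) := by
          rw [hp]
          intro hc
          rw [Sym2.mk_eq_mk_iff (p := (_, _)) (q := (_, _))] at hc
          rcases hc with h | h <;> simp_all [Prod.ext_iff]
        simp [eVec, this]
      · simp
  · rw [if_neg hr]
    apply Finset.sum_eq_zero
    intro k _
    have : (p : Sym2 (Fin n)) ≠ s(r, k) := by
      intro hc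
      exact hr (hc ▸ Sym2.mem_mk_left r k)
    simp [eVec, this]

lemma sum_degv (v : EdgeSpace n) : ∑ r : Fin n, degv v r = 0 := by
  simp only [degv_eq_sum]
  rw [Finset.sum_comm]
  apply Finset.sum_eq_zero
  intro p _
  obtain ⟨a, b, hab, hp⟩ := edge_rep p
  have : ∀ r : Fin n, (if r ∈ (p : Sym2 (Fin n)) then v p else 0)
      = (if r = a then v p else 0) + (if r = b then v p else 0) := by
    intro r
    by_cases h1 : r = a
    · subst h1; simp [hp, hab]
    · by_cases h2 : r = b
      · subst h2; simp [hp, Ne.symm hab, h1]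
      · simp [hp, Sym2.mem_iff, h1, h2]
  simp only [this, Finset.sum_add_distrib, Finset.sum_ite_eq', Finset.mem_univ, if_pos]
  exact CharTwo.add_self_eq_zero _

lemma degv_eVec (i j r : Fin n) (h : i ≠ j) :
    degv (eVec n i j) r = if r = i ∨ r = j then 1 else 0 := by
  rw [degv_eq_sum]
  rw [Finset.sum_eq_single (mkE n i j h)]
  · simp only [mkE]
    by_cases hr : r = i ∨ r = j
    · rw [if_pos hr]
      simp [eVec, Sym2.mem_iff, hr]
    · rw [if_neg hr]
      simp [Sym2.mem_iff, hr]
  · intro p _ hp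
    have : eVec n i j p = 0 := by
      have : (p : Sym2 (Fin n)) ≠ s(i, j) := fun hc => hp (Subtype.ext hc)
      simp [eVec, this]
    rw [this, ite_self]
  · simp

lemma degv_add (v w : EdgeSpace n) (r : Fin n) :
    degv (v + w) r = degv v r + degv w r := by
  unfold degv
  rw [← Finset.sum_add_distrib]
  exact Finset.sum_congr rfl fun k _ => edot_add_left _ _ _

lemma degv_smul (c : ZMod 2) (v : EdgeSpace n) (r : Fin n) :
    degv (c • v) r = c * degv v r := by
  unfold degv edot
  rw [Finset.mul_sum]
  refine Finset.sum_congr rfl fun k _ => ?_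
  rw [Finset.mul_sum]
  exact Finset.sum_congr rfl fun p _ => by simp [mul_assoc]

lemma degv_zero (r : Fin n) : degv (0 : EdgeSpace n) r = 0 := by
  unfold degv edot; simp

lemma degv_sum {ι : Type*} (s : Finset ι) (f : ι → EdgeSpace n) (r : Fin n) :
    degv (∑ i ∈ s, f i) r = ∑ i ∈ s, degv (f i) r := by
  unfold degv
  rw [Finset.sum_comm]
  exact Finset.sum_congr rfl fun k _ => edot_sum_left _ _ _

end Deg
section EvenMem

variable {n : ℕ}

lemma triVec_apply (i j k : Fin n) (p : EdgeIdx n) :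
    triVec n i j k p = (if (p : Sym2 (Fin n)) = s(i, j) then (1 : ZMod 2) else 0)
      + (if (p : Sym2 (Fin n)) = s(j, k) then 1 else 0)
      + (if (p : Sym2 (Fin n)) = s(k, i) then 1 else 0) := rfl

lemma mkE_val (P : EdgeSpace n) (i j : Fin n) (h : i ≠ j) (p : EdgeIdx n)
    (hp : (p : Sym2 (Fin n)) = s(i, j)) : P (mkE n i j h) = P p := by
  congr 1
  exact Subtype.ext hp.symm

lemma even_mem_C1perp (n : ℕ) [NeZero n] (P : EdgeSpace n) (hdeg : ∀ r, degv P r = 0) :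
    P ∈ C1perp n := by
  classical
  set c : Fin n → Fin n → ZMod 2 := fun j k => edot P (eVec n j k) with hcdef
  have c_symm : ∀ j k, c j k = c k j := fun j k => by
    simp only [hcdef]; rw [eVec_symm]
  have c_diag : ∀ j, c j j = 0 := fun j => edot_eVec_diag P j
  have key : P = ∑ j : Fin n, ∑ k : Fin n,
      (if j < k ∧ j ≠ 0 ∧ k ≠ 0 then c j k • triVec n 0 j k else 0) := by
    funext p
    have eval : (∑ j : Fin n, ∑ k : Fin n,
        (if j < k ∧ j ≠ 0 ∧ k ≠ 0 then c j k • triVec n 0 j k else 0)) p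
        = ∑ j : Fin n, ∑ k : Fin n,
          (if j < k ∧ j ≠ 0 ∧ k ≠ 0 then c j k * (triVec n 0 j k p) else 0) := by
      rw [Finset.sum_apply]
      refine Finset.sum_congr rfl fun j _ => ?_
      rw [Finset.sum_apply]
      refine Finset.sum_congr rfl fun k _ => ?_
      split_ifs <;> simp
    rw [eval]; clear eval
    obtain ⟨a, b, hab, hp⟩ := edge_rep p
    by_cases h0 : (0 : Fin n) ∈ (p : Sym2 (Fin n))
    · -- case: 0 is an endpoint of p
      obtain ⟨b, hb0, hq⟩ : ∃ b' : Fin n, b' ≠ 0 ∧ (p : Sym2 (Fin n)) = s(0, b') := by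
        rw [hp, Sym2.mem_iff] at h0
        rcases h0 with h0 | h0
        · exact ⟨b, fun hb => hab (by rw [← h0, hb]), by rw [hp, ← h0]⟩
        · exact ⟨a, fun ha => hab (by rw [ha, ← h0]), by rw [hp, ← h0]; exact Sym2.eq_swap⟩
      have term_eq : ∀ j k : Fin n,
          (if j < k ∧ j ≠ 0 ∧ k ≠ 0 then c j k * (triVec n 0 j k p) else 0)
          = (if j = b then (if b < k ∧ b ≠ 0 ∧ k ≠ 0 then c b k else 0) else 0)
            + (if k = b then (if j < b ∧ j ≠ 0 ∧ b ≠ 0 then c j b else 0) else 0) := by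
        intro j k
        rw [triVec_apply, hq]
        have e1 : (s(0, b) = s((0 : Fin n), j)) ↔ j = b := by
          rw [Sym2.congr_right]; exact eq_comm
        have e3 : (s(0, b) = s(k, (0 : Fin n))) ↔ k = b := by
          rw [Sym2.eq_swap (a := k), Sym2.congr_right]; exact eq_comm
        have e2 : (s((0 : Fin n), b) = s(j, k)) ↔ (((0 : Fin n) = j ∧ b = k) ∨ ((0 : Fin n) = k ∧ b = j)) := by
          rw [Sym2.mk_eq_mk_iff (p := (_, _)) (q := (_, _))]
          simp [Prod.ext_iff]
        rw [if_congr e1 rfl rfl, if_congr e2 rfl rfl, if_congr e3 rfl rfl]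
        have hsym := c_symm j k
        split_ifs <;>
          first
            | ring1
            | (exfalso; simp only [Fin.lt_def, Fin.ext_iff, Fin.val_zero, ne_eq] at *; omega)
            | (simp_all; try ring1)
      simp only [term_eq]
      have step1 : ∀ j : Fin n, (∑ k : Fin n,
          ((if j = b then (if b < k ∧ b ≠ 0 ∧ k ≠ 0 then c b k else 0) else 0)
            + (if k = b then (if j < b ∧ j ≠ 0 ∧ b ≠ 0 then c j b else 0) else 0)))
          = (if j = b then (∑ k : Fin n, (if b < k ∧ b ≠ 0 ∧ k ≠ 0 then c b k else 0)) else 0)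
            + (if j < b ∧ j ≠ 0 ∧ b ≠ 0 then c j b else 0) := by
        intro j
        rw [Finset.sum_add_distrib]
        congr 1
        · by_cases hjb : j = b
          · simp [hjb]
          · simp [hjb]
        · rw [Finset.sum_ite_eq' Finset.univ b]
          simp
      simp only [step1]
      rw [Finset.sum_add_distrib, Finset.sum_ite_eq' Finset.univ b, if_pos (Finset.mem_univ b),
        ← Finset.sum_add_distrib]
      have comb : ∀ k : Fin n,
          ((if b < k ∧ b ≠ 0 ∧ k ≠ 0 then c b k else 0)
            + (if k < b ∧ k ≠ 0 ∧ b ≠ 0 then c k b else 0))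
          = (if k ≠ 0 ∧ k ≠ b then c b k else 0) := by
        intro k
        have hsym := c_symm k b
        split_ifs <;>
          first
            | ring1
            | (exfalso; simp only [Fin.lt_def, Fin.ext_iff, Fin.val_zero, ne_eq] at *; omega)
            | (simp_all; try ring1)
      simp only [comb]
      have hdb : (∑ k : Fin n, c b k) = 0 := hdeg b
      have hsplit : (∑ k : Fin n, c b k)
          = (∑ k : Fin n, (if k ≠ 0 ∧ k ≠ b then c b k else 0)) + (c b 0 + c b b) := by
        rw [Finset.sum_ite, Finset.sum_const_zero, add_zero]
        rw [← Finset.sum_filter_add_sum_filter_not Finset.univ (fun k => k ≠ 0 ∧ k ≠ b) (c b ·)]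
        congr 1
        have hset : Finset.univ.filter (fun k : Fin n => ¬(k ≠ 0 ∧ k ≠ b)) = {0, b} := by
          ext x
          simp only [Finset.mem_filter, Finset.mem_univ, true_and, Finset.mem_insert,
            Finset.mem_singleton]
          tauto
        rw [hset, Finset.sum_pair (Ne.symm hb0)]
      rw [hsplit, c_diag, add_zero] at hdb
      have hc0 : c b 0 = P p := by
        simp only [hcdef]
        rw [edot_eVec P b 0 hb0]
        exact mkE_val P b 0 hb0 p (by rw [hq]; exact Sym2.eq_swap.symm)
      rw [hc0] at hdb
      rw [add_comm] at hdb
      exact (CharTwo.add_eq_iff_eq_add.mp hdb).trans (zero_add _)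
    · -- case: 0 is not an endpoint of p
      have ha0 : a ≠ 0 := fun h => h0 (by rw [hp, h]; exact Sym2.mem_mk_left 0 b)
      have hb0 : b ≠ 0 := fun h => h0 (by rw [hp, h]; exact Sym2.mem_mk_right a 0)
      obtain ⟨a, b, hlt, ha0, hb0, hq⟩ : ∃ a' b' : Fin n, a' < b' ∧ a' ≠ 0 ∧ b' ≠ 0 ∧
          (p : Sym2 (Fin n)) = s(a', b') := by
        rcases lt_or_gt_of_ne hab with h | h
        · exact ⟨a, b, h, ha0, hb0, hp⟩
        · exact ⟨b, a, h, hb0, ha0, by rw [hp]; exact Sym2.eq_swap⟩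
      have tri_zero : ∀ j k : Fin n, ¬(j = a ∧ k = b) →
          (if j < k ∧ j ≠ 0 ∧ k ≠ 0 then c j k * triVec n 0 j k p else 0) = 0 := by
        intro j k hne
        by_cases hcond : j < k ∧ j ≠ 0 ∧ k ≠ 0
        · rw [if_pos hcond]
          obtain ⟨hjk, hj0, hk0⟩ := hcond
          have htri : triVec n 0 j k p = 0 := by
            rw [triVec_apply, hq]
            have h1 : ¬(s(a, b) = s((0 : Fin n), j)) := by
              intro hcon
              rw [Sym2.mk_eq_mk_iff (p := (_, _)) (q := (_, _))] at hcon
              rcases hcon with h | h <;>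
                (simp only [Prod.mk.injEq, Prod.swap_prod_mk, Fin.ext_iff, Fin.val_zero] at h
                 simp only [Fin.ext_iff, Fin.val_zero, ne_eq] at ha0 hb0
                 omega)
            have h3 : ¬(s(a, b) = s(k, (0 : Fin n))) := by
              intro hcon
              rw [Sym2.mk_eq_mk_iff (p := (_, _)) (q := (_, _))] at hcon
              rcases hcon with h | h <;>
                (simp only [Prod.mk.injEq, Prod.swap_prod_mk, Fin.ext_iff, Fin.val_zero] at h
                 simp only [Fin.ext_iff, Fin.val_zero, ne_eq] at ha0 hb0
                 omega)
            have h2 : ¬(s(a, b) = s(j, k)) := by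
              intro hcon
              rw [Sym2.mk_eq_mk_iff (p := (_, _)) (q := (_, _))] at hcon
              simp only [not_and] at hne
              rcases hcon with h | h <;>
                (simp only [Prod.mk.injEq, Prod.swap_prod_mk, Fin.ext_iff] at h
                 simp only [Fin.ext_iff] at hne
                 simp only [Fin.lt_def] at hjk hlt
                 omega)
            rw [if_neg h1, if_neg h2, if_neg h3]
            norm_num
          rw [htri, mul_zero]
        · rw [if_neg hcond]
      rw [Finset.sum_eq_single a]
      · rw [Finset.sum_eq_single b]
        · have htri : triVec n 0 a b p = 1 := by
            rw [triVec_apply, hq]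
            have h1 : ¬(s(a, b) = s((0 : Fin n), a)) := by
              intro hcon
              rw [Sym2.mk_eq_mk_iff (p := (_, _)) (q := (_, _))] at hcon
              rcases hcon with h | h <;>
                (simp only [Prod.mk.injEq, Prod.swap_prod_mk, Fin.ext_iff, Fin.val_zero] at h
                 simp only [Fin.ext_iff, Fin.val_zero, ne_eq] at ha0 hb0
                 omega)
            have h3 : ¬(s(a, b) = s(b, (0 : Fin n))) := by
              intro hcon
              rw [Sym2.mk_eq_mk_iff (p := (_, _)) (q := (_, _))] at hcon
              rcases hcon with h | h <;>
                (simp only [Prod.mk.injEq, Prod.swap_prod_mk, Fin.ext_iff, Fin.val_zero] at h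
                 simp only [Fin.ext_iff, Fin.val_zero, ne_eq] at ha0 hb0
                 omega)
            rw [if_neg h1, if_pos rfl, if_neg h3]
            norm_num
          rw [if_pos ⟨hlt, ha0, hb0⟩, htri, mul_one]
          simp only [hcdef]
          rw [edot_eVec P a b (ne_of_lt hlt)]
          exact (mkE_val P a b (ne_of_lt hlt) p hq).symm
        · intro k _ hk
          exact tri_zero a k (fun h => hk h.2)
        · intro h
          exact absurd (Finset.mem_univ b) h
      · intro j _ hj
        apply Finset.sum_eq_zero
        intro k _
        exact tri_zero j k (fun h => hj h.1)
      · intro h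
        exact absurd (Finset.mem_univ a) h
  rw [key]
  apply Submodule.sum_mem
  intro j _
  apply Submodule.sum_mem
  intro k _
  split_ifs with hc
  · exact Submodule.smul_mem _ _
      (Submodule.subset_span ⟨j, k, hc.2.1, hc.2.2, ne_of_lt hc.1, rfl⟩)
  · exact Submodule.zero_mem _

end EvenMem
section Matching

lemma degv_matching (N : ℕ) (hN : 4 ≤ N) (hEven : Even N) (r : Fin N) :
    degv (matching N) r = 1 := by
  obtain ⟨m, hm⟩ := hEven
  unfold matching
  rw [degv_sum]
  have key : ∀ i : Fin (N / 2),
      degv (eVec N ⟨2 * i.val, by have := i.isLt; omega⟩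
        ⟨2 * i.val + 1, by have := i.isLt; omega⟩) r
      = if r.val = 2 * i.val ∨ r.val = 2 * i.val + 1 then 1 else 0 := by
    intro i
    rw [degv_eVec _ _ _ (by simp [Fin.ext_iff])]
    congr 1
    simp [Fin.ext_iff]
  rw [Finset.sum_congr rfl (fun i _ => key i)]
  have hr := r.isLt
  have hi0 : r.val / 2 < N / 2 := by omega
  rw [Finset.sum_eq_single (⟨r.val / 2, hi0⟩ : Fin (N / 2))]
  · rw [if_pos (by simp; omega)]
  · intro i _ hi
    rw [if_neg]
    intro hcon
    apply hi
    have : i.val = r.val / 2 := by omega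
    exact Fin.ext (by simp [this])
  · intro h
    exact absurd (Finset.mem_univ _) h

/-- The `i`-th matching edge as an edge index. -/
def mEdge (N : ℕ) (hN : 4 ≤ N) (i : Fin (N / 2)) : EdgeIdx N :=
  mkE N ⟨2 * i.val, by have := i.isLt; omega⟩ ⟨2 * i.val + 1, by have := i.isLt; omega⟩
    (by simp [Fin.ext_iff])

lemma matching_mEdge (N : ℕ) (hN : 4 ≤ N) (i : Fin (N / 2)) :
    matching N (mEdge N hN i) = 1 := by
  unfold matching
  rw [Finset.sum_apply]
  rw [Finset.sum_eq_single i]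
  · simp [eVec, mEdge, mkE]
  · intro i' _ hi'
    have : (↑(mEdge N hN i) : Sym2 (Fin N)) ≠ s(⟨2 * i'.val, by have := i'.isLt; omega⟩,
        ⟨2 * i'.val + 1, by have := i'.isLt; omega⟩) := by
      simp only [mEdge, mkE]
      intro hcon
      rw [Sym2.mk_eq_mk_iff (p := (_, _)) (q := (_, _))] at hcon
      apply hi'
      rcases hcon with h | h <;>
        · simp only [Prod.mk.injEq, Prod.swap_prod_mk, Fin.mk.injEq] at h
          exact Fin.ext (by omega)
    simp [eVec, this]
  · intro h
    exact absurd (Finset.mem_univ _) h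

lemma matching_not_mEdge (N : ℕ) (hN : 4 ≤ N) (p : EdgeIdx N)
    (h : ∀ i : Fin (N / 2), p ≠ mEdge N hN i) : matching N p = 0 := by
  unfold matching
  rw [Finset.sum_apply]
  apply Finset.sum_eq_zero
  intro i _
  have : (p : Sym2 (Fin N)) ≠ s(⟨2 * i.val, by have := i.isLt; omega⟩,
      ⟨2 * i.val + 1, by have := i.isLt; omega⟩) := by
    intro hcon
    exact h i (Subtype.ext hcon)
  simp [eVec, this]

lemma wt_matching (N : ℕ) (hN : 4 ≤ N) (hEven : Even N) : wt (matching N) = N / 2 := by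
  unfold wt
  have hset : (Finset.univ.filter fun p => matching N p ≠ 0)
      = Finset.univ.image (mEdge N hN) := by
    ext p
    simp only [Finset.mem_filter, Finset.mem_univ, true_and, Finset.mem_image]
    constructor
    · intro hp
      by_contra hc
      push_neg at hc
      exact hp (matching_not_mEdge N hN p (fun i hi => hc i hi.symm))
    · rintro ⟨i, _, rfl⟩
      rw [matching_mEdge N hN i]
      exact one_ne_zero
  rw [hset, Finset.card_image_of_injective _ ?_, Finset.card_univ, Fintype.card_fin]
  intro i i' hii
  have : (↑(mEdge N hN i) : Sym2 (Fin N)) = ↑(mEdge N hN i') := by rw [hii]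
  simp only [mEdge, mkE] at this
  rw [Sym2.mk_eq_mk_iff (p := (_, _)) (q := (_, _))] at this
  rcases this with h | h <;>
    · simp only [Prod.mk.injEq, Prod.swap_prod_mk, Fin.mk.injEq] at h
      exact Fin.ext (by omega)

end Matching
/-- For even `N ≥ 4`, the minimum Hamming weight of an element of `C_2^⊥ \ C_1^⊥` equals
`N/2`, achieved by the perfect-matching vector `Σ_{i=1}^{N/2} e_{2i-1,2i}`. -/
theorem min_weight_eq_half (N : ℕ) [NeZero N] (hN : 4 ≤ N) (hEven : Even N) :
    (∀ w ∈ C2 N, edot (matching N) w = 0) ∧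
    matching N ∉ C1perp N ∧
    wt (matching N) = N / 2 ∧
    (∀ P : EdgeSpace N, (∀ w ∈ C2 N, edot P w = 0) → P ∉ C1perp N → N / 2 ≤ wt P) := by
  have part1 : ∀ w ∈ C2 N, edot (matching N) w = 0 := by
    intro w hw
    induction hw using Submodule.span_induction with
    | mem x h =>
      obtain ⟨j, hj0, hjlt, rfl⟩ := h
      rw [edot_add_right, edot_starVec, edot_starVec,
        degv_matching N hN hEven, degv_matching N hN hEven]
      decide
    | zero => exact edot_zero_right _
    | add x y hx hy ih1 ih2 => rw [edot_add_right, ih1, ih2, add_zero]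
    | smul a x hx ih => rw [edot_smul_right, ih, mul_zero]
  have deg0_C1perp : ∀ v ∈ C1perp N, degv v 0 = 0 := by
    intro v hv
    induction hv using Submodule.span_induction with
    | mem x h =>
      obtain ⟨j, k, hj, hk, hjk, rfl⟩ := h
      unfold triVec
      rw [degv_add, degv_add, degv_eVec _ _ _ (Ne.symm hj), degv_eVec _ _ _ hjk,
        degv_eVec _ _ _ hk]
      rw [if_pos (Or.inl rfl), if_neg (by push_neg; exact ⟨Ne.symm hj, Ne.symm hk⟩),
        if_pos (Or.inr rfl)]
      decide
    | zero => exact degv_zero 0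
    | add x y hx hy ih1 ih2 => rw [degv_add, ih1, ih2, add_zero]
    | smul a x hx ih => rw [degv_smul, ih, mul_zero]
  have part2 : matching N ∉ C1perp N := by
    intro hmem
    have h0 := deg0_C1perp _ hmem
    rw [degv_matching N hN hEven] at h0
    exact one_ne_zero h0
  have part3 : wt (matching N) = N / 2 := wt_matching N hN hEven
  refine ⟨part1, part2, part3, ?_⟩
  intro P hC2 hC1
  have hdeq : ∀ j : Fin N, 0 < j.val → j.val < N - 1 → degv P j = degv P 0 := by
    intro j h1 h2
    have hmem : starVec N 0 + starVec N j ∈ C2 N := Submodule.subset_span ⟨j, h1, h2, rfl⟩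
    have hthis := hC2 _ hmem
    rw [edot_add_right, edot_starVec, edot_starVec, add_comm] at hthis
    exact (CharTwo.add_eq_iff_eq_add.mp hthis).trans (zero_add _)
  have hall : ∀ r : Fin N, degv P r = degv P 0 := by
    intro r
    by_cases hr1 : r.val < N - 1
    · by_cases hr0 : r.val = 0
      · rw [show r = 0 from Fin.ext (by simp [hr0])]
      · exact hdeq r (Nat.pos_of_ne_zero hr0) hr1
    · have hsum := sum_degv P
      rw [← Finset.add_sum_erase _ _ (Finset.mem_univ r)] at hsum
      have herase : ∀ x ∈ Finset.univ.erase r, degv P x = degv P 0 := by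
        intro x hx
        have hxr : x ≠ r := (Finset.mem_erase.mp hx).1
        by_cases hx0 : x.val = 0
        · rw [show x = 0 from Fin.ext (by simp [hx0])]
        · apply hdeq x (Nat.pos_of_ne_zero hx0)
          have hr := r.isLt
          have hxlt := x.isLt
          rcases Nat.lt_or_ge x.val (N - 1) with h | h
          · exact h
          · exact absurd (Fin.ext (show x.val = r.val by omega)) hxr
      rw [Finset.sum_congr rfl herase, Finset.sum_const] at hsum
      have hcard : (Finset.univ.erase r).card = N - 1 := by
        rw [Finset.card_erase_of_mem (Finset.mem_univ r)]
        simp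
      rw [hcard] at hsum
      have hodd : ((N - 1) • degv P 0) = degv P 0 := by
        obtain ⟨m, hm⟩ := hEven
        rw [nsmul_eq_mul, show N - 1 = 2 * (m - 1) + 1 from by omega]
        push_cast
        rw [show ((2 : ZMod 2)) = 0 from rfl]
        ring
      rw [hodd] at hsum
      exact (CharTwo.add_eq_iff_eq_add.mp hsum).trans (zero_add _)
  have hd1 : degv P 0 = 1 := by
    by_contra hne
    have h0 : degv P 0 = 0 := by
      have hh : ∀ d : ZMod 2, d ≠ 1 → d = 0 := by decide
      exact hh _ hne
    exact hC1 (even_mem_C1perp N P (fun r => (hall r).trans h0))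
  have hcover : ∀ r : Fin N, ∃ p : EdgeIdx N, P p ≠ 0 ∧ r ∈ (p : Sym2 (Fin N)) := by
    intro r
    by_contra hc
    push_neg at hc
    have hz : degv P r = 0 := by
      rw [degv_eq_sum]
      apply Finset.sum_eq_zero
      intro p _
      by_cases hm : r ∈ (p : Sym2 (Fin N))
      · rw [if_pos hm]
        exact of_not_not (fun h => hc p h hm)
      · rw [if_neg hm]
    rw [hall r, hd1] at hz
    exact one_ne_zero hz
  choose f hf1 hf2 using hcover
  have hbound : (Finset.univ : Finset (Fin N)).card ≤ 2 * ((Finset.univ).image f).card := by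
    apply Finset.card_le_mul_card_image
    intro p _
    obtain ⟨a, b, hab, hpe⟩ := edge_rep p
    have hsub : (Finset.univ.filter (fun r => f r = p)) ⊆ {a, b} := by
      intro r hr
      have hfr := (Finset.mem_filter.mp hr).2
      have hmem := hf2 r
      rw [hfr] at hmem
      rw [hpe, Sym2.mem_iff] at hmem
      simpa using hmem
    calc (Finset.univ.filter (fun r => f r = p)).card
        ≤ ({a, b} : Finset (Fin N)).card := Finset.card_le_card hsub
      _ ≤ 2 := (Finset.card_insert_le _ _).trans (by simp)
  have himg : (Finset.univ.image f) ⊆ Finset.univ.filter (fun p => P p ≠ 0) := by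
    intro p hp
    obtain ⟨r, _, rfl⟩ := Finset.mem_image.mp hp
    exact Finset.mem_filter.mpr ⟨Finset.mem_univ _, hf1 r⟩
  have hfin : N ≤ 2 * wt P := by
    calc N = (Finset.univ : Finset (Fin N)).card := by simp
      _ ≤ 2 * (Finset.univ.image f).card := hbound
      _ ≤ 2 * wt P := Nat.mul_le_mul_left 2 (Finset.card_le_card himg)
  omega
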